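/- Let A1, A2 be nonempty finite sets, U1, U2 : A1 × A2 → ℝ, x̄ a mixed strategy over A1, y0 ∈ A2, and c > 0 such that U2(x̄, y0) ≥ U2(x̄, y) + c for every y ≠ y0. Set M = U1(x̄, y0) − min_{y ∈ A2} U1(x̄, y). Then for any finite sequence y^1, …, y^T of mixed strategies over A2 satisfying Σ_{t=1}^T (U2(x̄, y0) − U2(x̄, y^t)) ≤ R for some R ≥ 0, the leader's cumulative utility satisfies Σ_{t=1}^T U1(x̄, y^t) ≥ T·U1(x̄, y0) − (M/c)·R. -/

import Mathlib

/-!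
Statement 8 (composite leader-utility bound): if `y0` is a strict best response with
margin `c > 0` to the fixed leader commitment `x̄`, and the follower's cumulative regret
against `x̄` over the sequence `y^1, …, y^T` is at most `R`, then the leader's cumulative
utility is at least `T·U1(x̄, y0) − (M/c)·R`, where
`M = U1(x̄, y0) − min_{y ∈ A2} U1(x̄, y)`.
-/

/-- A mixed strategy on a finite set: nonnegative and summing to 1. -/
def IsMixed {S : Type*} [Fintype S] (p : S → ℝ) : Prop :=
  (∀ s, 0 ≤ p s) ∧ ∑ s, p s = 1

theorem leader_cumulative_utility_bound
    {A1 A2 : Type*} [Fintype A1] [Fintype A2] [Nonempty A1] [Nonempty A2]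
    (U1 U2 : A1 → A2 → ℝ) (xb : A1 → ℝ) (y0 : A2) (c : ℝ)
    (hxb : IsMixed xb) (hc : 0 < c)
    (hstrict : ∀ y : A2, y ≠ y0 → (∑ a, xb a * U2 a y0) ≥ (∑ a, xb a * U2 a y) + c)
    (T : ℕ) (ys : Fin T → A2 → ℝ) (hys : ∀ t, IsMixed (ys t))
    (R : ℝ) (hR : 0 ≤ R)
    (hreg : (∑ t, ((∑ a, xb a * U2 a y0) - (∑ a, ∑ b, xb a * ys t b * U2 a b))) ≤ R) :
    (∑ t, ∑ a, ∑ b, xb a * ys t b * U1 a b) ≥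
      (T : ℝ) * (∑ a, xb a * U1 a y0) -
        (((∑ a, xb a * U1 a y0) - ⨅ y : A2, ∑ a, xb a * U1 a y) / c) * R := by
  classical
  set f : A2 → ℝ := fun y => ∑ a, xb a * U1 a y with hf
  set g : A2 → ℝ := fun y => ∑ a, xb a * U2 a y with hg
  set M : ℝ := f y0 - ⨅ y, f y with hM
  have hinf : ∀ y, (⨅ y, f y) ≤ f y := fun y =>
    ciInf_le (Set.Finite.bddBelow (Set.finite_range f)) y
  have hM0 : 0 ≤ M := by have := hinf y0; simp only [hM]; linarith
  have hswap1 : ∀ t, (∑ a, ∑ b, xb a * ys t b * U1 a b) = ∑ b, ys t b * f b := by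
    intro t
    rw [Finset.sum_comm]
    refine Finset.sum_congr rfl fun b _ => ?_
    rw [hf, Finset.mul_sum]
    exact Finset.sum_congr rfl fun a _ => by ring
  have hswap2 : ∀ t, (∑ a, ∑ b, xb a * ys t b * U2 a b) = ∑ b, ys t b * g b := by
    intro t
    rw [Finset.sum_comm]
    refine Finset.sum_congr rfl fun b _ => ?_
    rw [hg, Finset.mul_sum]
    exact Finset.sum_congr rfl fun a _ => by ring
  have key : ∀ t, f y0 - ∑ b, ys t b * f b ≤
      (M / c) * (g y0 - ∑ b, ys t b * g b) := by
    intro t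
    have h1 : f y0 = ∑ b, ys t b * f y0 := by
      rw [← Finset.sum_mul, (hys t).2, one_mul]
    have h2 : g y0 = ∑ b, ys t b * g y0 := by
      rw [← Finset.sum_mul, (hys t).2, one_mul]
    have lhs : f y0 - ∑ b, ys t b * f b = ∑ b, ys t b * (f y0 - f b) := by
      simp only [mul_sub]; rw [Finset.sum_sub_distrib, ← h1]
    have rhs : g y0 - ∑ b, ys t b * g b = ∑ b, ys t b * (g y0 - g b) := by
      simp only [mul_sub]; rw [Finset.sum_sub_distrib, ← h2]
    rw [lhs, rhs, Finset.mul_sum]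
    refine Finset.sum_le_sum fun b _ => ?_
    by_cases hb : b = y0
    · subst hb; simp
    · have hgb : g y0 - g b ≥ c := by have := hstrict b hb; simp only [hg]; linarith
      have hfb : f y0 - f b ≤ M := by have := hinf b; simp only [hM]; linarith
      have hp : 0 ≤ ys t b := (hys t).1 b
      have h3 : ys t b * (f y0 - f b) ≤ ys t b * M := by
        exact mul_le_mul_of_nonneg_left hfb hp
      have h4 : ys t b * M ≤ M / c * (ys t b * (g y0 - g b)) := by
        have hMc : 0 ≤ M / c := div_nonneg hM0 hc.le
        have : ys t b * c ≤ ys t b * (g y0 - g b) :=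
          mul_le_mul_of_nonneg_left hgb hp
        calc ys t b * M = M / c * (ys t b * c) := by field_simp
          _ ≤ M / c * (ys t b * (g y0 - g b)) := mul_le_mul_of_nonneg_left this hMc
      exact h3.trans h4
  have hsum : (T : ℝ) * f y0 - ∑ t, ∑ b, ys t b * f b ≤
      (M / c) * (∑ t, (g y0 - ∑ b, ys t b * g b)) := by
    calc (T : ℝ) * f y0 - ∑ t, ∑ b, ys t b * f b
        = ∑ t : Fin T, (f y0 - ∑ b, ys t b * f b) := by
          rw [Finset.sum_sub_distrib, Finset.sum_const, Finset.card_univ,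
            Fintype.card_fin, nsmul_eq_mul]
      _ ≤ ∑ t, (M / c) * (g y0 - ∑ b, ys t b * g b) :=
          Finset.sum_le_sum fun t _ => key t
      _ = (M / c) * (∑ t, (g y0 - ∑ b, ys t b * g b)) := by rw [Finset.mul_sum]
  have hreg' : (∑ t, (g y0 - ∑ b, ys t b * g b)) ≤ R := by
    calc (∑ t, (g y0 - ∑ b, ys t b * g b))
        = ∑ t, ((∑ a, xb a * U2 a y0) - (∑ a, ∑ b, xb a * ys t b * U2 a b)) :=
          Finset.sum_congr rfl fun t _ => by rw [hswap2 t]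
      _ ≤ R := hreg
  have hMc : 0 ≤ M / c := div_nonneg hM0 hc.le
  have hfin : (M / c) * (∑ t, (g y0 - ∑ b, ys t b * g b)) ≤ (M / c) * R :=
    mul_le_mul_of_nonneg_left hreg' hMc
  have hrw : (∑ t, ∑ a, ∑ b, xb a * ys t b * U1 a b) = ∑ t, ∑ b, ys t b * f b :=
    Finset.sum_congr rfl fun t _ => hswap1 t
  rw [ge_iff_le, hrw]
  simp only [hM] at hsum hfin ⊢
  linarith
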